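/- Let a, b ∈ ℤ with b ≥ a + 2, and let L : ℤ × ℝ × ℝ → ℝ, written L(t,u,v), be such that for each t the map (u,v) ↦ L(t,u,v) is continuously differentiable. For y : ℤ → ℝ set 𝓛[y] = Σ_{t=a}^{b−1} L(t, y(t+1), (Δy)(t)). Suppose y* : ℤ → ℝ satisfies y*(a) = α, y*(b) = β, and is a local extremum: there exists δ > 0 such that 𝓛[y*] ≤ 𝓛[y] (or 𝓛[y*] ≥ 𝓛[y]) for every y : ℤ → ℝ with y(a) = α, y(b) = β and max_{a ≤ t ≤ b} |y(t) − y*(t)| < δ. Then for all t with a ≤ t ≤ b − 2: ∂L/∂v(t+1, y*(t+2), (Δy*)(t+1)) − ∂L/∂v(t, y*(t+1), (Δy*)(t)) = ∂L/∂u(t, y*(t+1), (Δy*)(t)). -/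

import Mathlib

/-- The discrete (delta) Lagrangian functional
`𝓛[y] = Σ_{t=a}^{b−1} L(t, y(t+1), Δy(t))` on the time scale `T = ℤ`,
where `Δy(t) = y(t+1) − y(t)`. -/
noncomputable def deltaLagrangianFunctional (a b : ℤ) (L : ℤ → ℝ → ℝ → ℝ) (y : ℤ → ℝ) : ℝ :=
  ∑ t ∈ Finset.Icc a (b - 1), L t (y (t + 1)) (y (t + 1) - y t)

/-- Bohner's Euler-Lagrange equation on the time scale `T = ℤ`: if for each `t` the map
`(u,v) ↦ L(t,u,v)` is `C¹` and `y*` is a local extremum of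
`𝓛[y] = Σ_{t=a}^{b−1} L(t, y(t+1), Δy(t))` among functions with `y(a) = α`, `y(b) = β`,
then for `a ≤ t ≤ b−2`:
`∂L/∂v(t+1, y*(t+2), Δy*(t+1)) − ∂L/∂v(t, y*(t+1), Δy*(t)) = ∂L/∂u(t, y*(t+1), Δy*(t))`. -/
theorem euler_lagrange_int (a b : ℤ) (hab : a + 2 ≤ b) (L : ℤ → ℝ → ℝ → ℝ)
    (hL : ∀ t : ℤ, ContDiff ℝ 1 (fun p : ℝ × ℝ => L t p.1 p.2))
    (α β : ℝ) (ystar : ℤ → ℝ) (ha : ystar a = α) (hb : ystar b = β)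
    (hext : ∃ δ > (0 : ℝ),
      (∀ y : ℤ → ℝ, y a = α → y b = β →
        (∀ t : ℤ, a ≤ t → t ≤ b → |y t - ystar t| < δ) →
        deltaLagrangianFunctional a b L ystar ≤ deltaLagrangianFunctional a b L y) ∨
      (∀ y : ℤ → ℝ, y a = α → y b = β →
        (∀ t : ℤ, a ≤ t → t ≤ b → |y t - ystar t| < δ) →
        deltaLagrangianFunctional a b L y ≤ deltaLagrangianFunctional a b L ystar)) :
    ∀ t : ℤ, a ≤ t → t ≤ b - 2 →
      deriv (fun v => L (t + 1) (ystar (t + 2)) v) (ystar (t + 2) - ystar (t + 1)) -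
        deriv (fun v => L t (ystar (t + 1)) v) (ystar (t + 1) - ystar t) =
      deriv (fun u => L t u (ystar (t + 1) - ystar t)) (ystar (t + 1)) := by
  intro t hta htb
  obtain ⟨δ, hδ, hext⟩ := hext
  set p0 : ℝ × ℝ := (ystar (t+1), ystar (t+1) - ystar t) with hp0
  set p1 : ℝ × ℝ := (ystar (t+2), ystar (t+2) - ystar (t+1)) with hp1
  set φ : ℝ × ℝ → ℝ := fun p => L t p.1 p.2 with hφdef
  set ψ : ℝ × ℝ → ℝ := fun p => L (t+1) p.1 p.2 with hψdef
  have hφd : HasFDerivAt φ (fderiv ℝ φ p0) p0 :=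
    (((hL t).differentiable one_ne_zero) p0).hasFDerivAt
  have hψd : HasFDerivAt ψ (fderiv ℝ ψ p1) p1 :=
    (((hL (t+1)).differentiable one_ne_zero) p1).hasFDerivAt
  set Dφ := fderiv ℝ φ p0 with hDφ
  set Dψ := fderiv ℝ ψ p1 with hDψ
  -- partial derivatives
  have hderiv_v_t : deriv (fun v => L t (ystar (t+1)) v) (ystar (t+1) - ystar t)
      = Dφ (0,1) := by
    have h1 : HasDerivAt (fun v : ℝ => ((ystar (t+1) : ℝ), v)) ((0:ℝ),(1:ℝ))
        (ystar (t+1) - ystar t) := HasDerivAt.prodMk (hasDerivAt_const _ _) (hasDerivAt_id _)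
    exact (hφd.comp_hasDerivAt (ystar (t+1) - ystar t) h1).deriv
  have hderiv_u_t : deriv (fun u => L t u (ystar (t+1) - ystar t)) (ystar (t+1))
      = Dφ (1,0) := by
    have h1 : HasDerivAt (fun u : ℝ => (u, ystar (t+1) - ystar t)) ((1:ℝ),(0:ℝ))
        (ystar (t+1)) := HasDerivAt.prodMk (hasDerivAt_id _) (hasDerivAt_const _ _)
    exact (hφd.comp_hasDerivAt (ystar (t+1)) h1).deriv
  have hderiv_v_t1 : deriv (fun v => L (t+1) (ystar (t+2)) v) (ystar (t+2) - ystar (t+1))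
      = Dψ (0,1) := by
    have h1 : HasDerivAt (fun v : ℝ => ((ystar (t+2) : ℝ), v)) ((0:ℝ),(1:ℝ))
        (ystar (t+2) - ystar (t+1)) := HasDerivAt.prodMk (hasDerivAt_const _ _) (hasDerivAt_id _)
    exact (hψd.comp_hasDerivAt (ystar (t+2) - ystar (t+1)) h1).deriv
  -- the variation
  set yε : ℝ → ℤ → ℝ := fun ε x => ystar x + if x = t+1 then ε else 0 with hyε
  set C : ℝ := ∑ s ∈ ((Finset.Icc a (b-1)).erase t).erase (t+1),
      L s (ystar (s+1)) (ystar (s+1) - ystar s) with hC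
  set F : ℝ → ℝ := fun ε =>
      φ (ystar (t+1) + ε, ystar (t+1) + ε - ystar t) +
      ψ (ystar (t+2), ystar (t+2) - (ystar (t+1) + ε)) + C with hFdef
  have htS : t ∈ Finset.Icc a (b-1) := by
    simp only [Finset.mem_Icc]; omega
  have ht1S : t+1 ∈ (Finset.Icc a (b-1)).erase t := by
    simp only [Finset.mem_erase, Finset.mem_Icc]; omega
  have hFeq : ∀ ε : ℝ, deltaLagrangianFunctional a b L (yε ε) = F ε := by
    intro ε
    unfold deltaLagrangianFunctional
    rw [← Finset.add_sum_erase _ _ htS, ← Finset.add_sum_erase _ _ ht1S]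
    have e1 : yε ε (t+1) = ystar (t+1) + ε := by simp [hyε]
    have e2 : yε ε t = ystar t := by simp [hyε]
    have e3 : yε ε (t+1+1) = ystar (t+2) := by
      simp only [hyε]
      rw [if_neg (by omega)]
      ring_nf
    have e4 : ∑ s ∈ ((Finset.Icc a (b-1)).erase t).erase (t+1),
        L s (yε ε (s+1)) (yε ε (s+1) - yε ε s) = C := by
      apply Finset.sum_congr rfl
      intro s hs
      simp only [Finset.mem_erase] at hs
      have h5 : yε ε (s+1) = ystar (s+1) := by
        simp only [hyε]; rw [if_neg (by omega)]; ring
      have h6 : yε ε s = ystar s := by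
        simp only [hyε]; rw [if_neg hs.1]; ring
      rw [h5, h6]
    rw [e1, e2, e3, e4]
    simp only [hFdef, hφdef, hψdef]
    ring
  have hy0 : yε 0 = ystar := by
    funext x; simp [hyε]
  have hF0 : F 0 = deltaLagrangianFunctional a b L ystar := by
    rw [← hFeq 0, hy0]
  -- constraints hold for yε
  have hcons : ∀ ε : ℝ, |ε| < δ →
      yε ε a = α ∧ yε ε b = β ∧ ∀ x : ℤ, a ≤ x → x ≤ b → |yε ε x - ystar x| < δ := by
    intro ε hε
    refine ⟨?_, ?_, ?_⟩
    · simp only [hyε]; rw [if_neg (by omega)]; rw [add_zero]; exact ha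
    · simp only [hyε]; rw [if_neg (by omega)]; rw [add_zero]; exact hb
    · intro x _ _
      simp only [hyε]
      by_cases hx : x = t+1
      · rw [if_pos hx]; simpa using hε
      · rw [if_neg hx]; simpa using hδ
  -- derivative of F at 0
  have h0 : HasDerivAt (fun ε : ℝ => ((ystar (t+1) + ε : ℝ), (ystar (t+1) + ε - ystar t : ℝ)))
      (((1:ℝ),(1:ℝ))) 0 :=
    (HasDerivAt.prodMk ((hasDerivAt_id (0:ℝ)).const_add _) (((hasDerivAt_id (0:ℝ)).const_add _).sub_const _))
  have h1 : HasDerivAt (fun ε : ℝ => ((ystar (t+2) : ℝ), (ystar (t+2) - (ystar (t+1) + ε) : ℝ)))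
      (((0:ℝ),(-1:ℝ))) 0 := by
    refine HasDerivAt.prodMk (hasDerivAt_const _ _) ?_
    have := ((hasDerivAt_id (0:ℝ)).const_add (ystar (t+1))).const_sub (ystar (t+2))
    simpa using this
  have hφd0 : HasFDerivAt φ Dφ (ystar (t+1) + 0, ystar (t+1) + 0 - ystar t) := by
    have : ((ystar (t+1) + 0 : ℝ), (ystar (t+1) + 0 - ystar t : ℝ)) = p0 := by
      simp [hp0]
    rw [this]; exact hφd
  have hψd0 : HasFDerivAt ψ Dψ (ystar (t+2), ystar (t+2) - (ystar (t+1) + 0)) := by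
    have : ((ystar (t+2) : ℝ), (ystar (t+2) - (ystar (t+1) + 0) : ℝ)) = p1 := by
      simp [hp1]
    rw [this]; exact hψd
  have hA : HasDerivAt (fun ε : ℝ => φ (ystar (t+1) + ε, ystar (t+1) + ε - ystar t))
      (Dφ (1,1)) 0 := by have := hφd0.comp_hasDerivAt 0 h0; exact this
  have hB : HasDerivAt (fun ε : ℝ => ψ (ystar (t+2), ystar (t+2) - (ystar (t+1) + ε)))
      (Dψ (0,-1)) 0 := by have := hψd0.comp_hasDerivAt 0 h1; exact this
  have hF' : HasDerivAt F (Dφ (1,1) + Dψ (0,-1)) 0 := (hA.add hB).add_const C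
  -- F has a local extremum at 0
  have hnear : ∀ᶠ ε : ℝ in nhds 0, |ε| < δ := by
    have := eventually_abs_sub_lt (0:ℝ) hδ
    simpa using this
  have hkey : Dφ (1,1) + Dψ (0,-1) = 0 := by
    rcases hext with h | h
    · have hmin : IsLocalMin F 0 := by
        filter_upwards [hnear] with ε hε
        obtain ⟨c1, c2, c3⟩ := hcons ε hε
        rw [hF0, ← hFeq ε]
        exact h (yε ε) c1 c2 c3
      exact hmin.hasDerivAt_eq_zero hF'
    · have hmax : IsLocalMax F 0 := by
        filter_upwards [hnear] with ε hε
        obtain ⟨c1, c2, c3⟩ := hcons ε hε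
        rw [hF0, ← hFeq ε]
        exact h (yε ε) c1 c2 c3
      exact hmax.hasDerivAt_eq_zero hF'
  rw [hderiv_v_t, hderiv_u_t, hderiv_v_t1]
  have hadd : Dφ (1,1) = Dφ (1,0) + Dφ (0,1) := by
    rw [show ((1:ℝ),(1:ℝ)) = ((1:ℝ),(0:ℝ)) + ((0:ℝ),(1:ℝ)) by simp]
    exact map_add _ _ _
  have hneg : Dψ (0,-1) = - Dψ (0,1) := by
    rw [show ((0:ℝ),(-1:ℝ)) = -((0:ℝ),(1:ℝ)) by simp [Prod.ext_iff]]
    exact map_neg _ _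
  rw [hneg] at hkey
  linarith [hkey, hadd]
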